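/- Let A be an n×n Hermitian matrix with entries in ℤ[ω] all of whose eigenvalues lie in the interval [−2, 2.5) and whose span is less than 4. Then each row of A has at most 4 nonzero entries. -/

import Mathlib

open Matrix Finset

section helpers

lemma omega_val : Complex.exp (2 * Real.pi * Complex.I / 3) = (-1/2 : ℝ) + (Real.sqrt 3 / 2 : ℝ) * Complex.I := by
  have h : (2 * (Real.pi:ℂ) * Complex.I / 3) = ((2 * Real.pi / 3 : ℝ) : ℂ) * Complex.I := by
    push_cast; ring
  rw [h, Complex.exp_mul_I, ← Complex.ofReal_cos, ← Complex.ofReal_sin]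
  have h1 : Real.cos (2 * Real.pi / 3) = -(1/2) := by
    have : 2 * Real.pi / 3 = Real.pi - Real.pi / 3 := by ring
    rw [this, Real.cos_pi_sub, Real.cos_pi_div_three]
  have h2 : Real.sin (2 * Real.pi / 3) = Real.sqrt 3 / 2 := by
    have : 2 * Real.pi / 3 = Real.pi - Real.pi / 3 := by ring
    rw [this, Real.sin_pi_sub, Real.sin_pi_div_three]
  rw [h1, h2]; norm_num

lemma eisenstein_form {z : ℂ}
    (hz : z ∈ Subring.closure ({Complex.exp (2 * Real.pi * Complex.I / 3)} : Set ℂ)) :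
    ∃ a b : ℤ, z = (a : ℂ) + (b : ℂ) * Complex.exp (2 * Real.pi * Complex.I / 3) := by
  have hω2 : Complex.exp (2 * Real.pi * Complex.I / 3) * Complex.exp (2 * Real.pi * Complex.I / 3)
      = -1 - Complex.exp (2 * Real.pi * Complex.I / 3) := by
    rw [omega_val]
    have h3 : Real.sqrt 3 * Real.sqrt 3 = 3 := Real.mul_self_sqrt (by norm_num)
    apply Complex.ext <;>
      simp [Complex.add_re, Complex.add_im, Complex.mul_re, Complex.mul_im] <;> nlinarith [h3]
  induction hz using Subring.closure_induction with
  | mem x hx => exact ⟨0, 1, by simp [Set.mem_singleton_iff.mp hx]⟩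
  | zero => exact ⟨0, 0, by simp⟩
  | one => exact ⟨1, 0, by simp⟩
  | add x y _ _ hx hy =>
      obtain ⟨a, b, rfl⟩ := hx; obtain ⟨c, d, rfl⟩ := hy
      exact ⟨a + c, b + d, by push_cast; ring⟩
  | neg x _ hx =>
      obtain ⟨a, b, rfl⟩ := hx
      exact ⟨-a, -b, by push_cast; ring⟩
  | mul x y _ _ hx hy =>
      obtain ⟨a, b, rfl⟩ := hx; obtain ⟨c, d, rfl⟩ := hy
      refine ⟨a * c - b * d, a * d + b * c - b * d, ?_⟩
      have expand : ∀ ω : ℂ, ((a:ℂ) + b * ω) * (c + d * ω)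
          = (a*c : ℂ) + ((a*d : ℂ) + (b*c:ℂ)) * ω + (b*d :ℂ) * (ω * ω) := by intro ω; ring
      rw [expand, hω2]; push_cast; ring

lemma eisenstein_norm {z : ℂ}
    (hz : z ∈ Subring.closure ({Complex.exp (2 * Real.pi * Complex.I / 3)} : Set ℂ))
    (hz0 : z ≠ 0) : 1 ≤ Complex.normSq z := by
  obtain ⟨a, b, rfl⟩ := eisenstein_form hz
  have h3 : Real.sqrt 3 * Real.sqrt 3 = 3 := Real.mul_self_sqrt (by norm_num)
  have hre : ((a:ℂ) + (b:ℂ) * Complex.exp (2 * Real.pi * Complex.I / 3)).re = (a : ℝ) - b / 2 := by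
    rw [omega_val]; simp; ring
  have him : ((a:ℂ) + (b:ℂ) * Complex.exp (2 * Real.pi * Complex.I / 3)).im = (b : ℝ) * (Real.sqrt 3 / 2) := by
    rw [omega_val]; simp
  have hns : Complex.normSq ((a:ℂ) + (b:ℂ) * Complex.exp (2 * Real.pi * Complex.I / 3))
      = ((a^2 - a*b + b^2 : ℤ) : ℝ) := by
    rw [Complex.normSq_apply, hre, him]; push_cast; nlinarith [h3]
  rw [hns]
  have hab : ¬(a = 0 ∧ b = 0) := by
    rintro ⟨rfl, rfl⟩; simp at hz0
  have hint : 1 ≤ a^2 - a*b + b^2 := by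
    rcases eq_or_ne b 0 with rfl | hb
    · have ha : a ≠ 0 := fun h => hab ⟨h, rfl⟩
      have := Int.one_le_abs ha
      nlinarith [abs_nonneg a, sq_abs a]
    · have hb1 := Int.one_le_abs hb
      have hb2 : 1 ≤ b^2 := by nlinarith [abs_nonneg b, sq_abs b]
      have h4 : 3 ≤ 4*(a^2 - a*b + b^2) := by nlinarith [sq_nonneg (2*a - b)]
      omega
  exact_mod_cast hint

lemma entry_formula {n : ℕ} (U : Matrix (Fin n) (Fin n) ℂ) (g : Fin n → ℝ) (i : Fin n) :
    (U * Matrix.diagonal (fun k => (g k : ℂ)) * star U) i i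
      = ((∑ k, g k * Complex.normSq (U i k) : ℝ) : ℂ) := by
  rw [Matrix.mul_apply]
  push_cast
  refine Finset.sum_congr rfl fun k _ => ?_
  rw [Matrix.mul_diagonal, Matrix.star_apply,
    Complex.star_def, mul_comm (U i k) _, mul_assoc, Complex.mul_conj]

end helpers

/-- a small-span Hermitian matrix over the Eisenstein integers
ℤ[ω] (ω = e^{2πi/3}) with all eigenvalues in [-2, 2.5) has at most 4 nonzero
entries in each row. -/
theorem stmt_3 (n : ℕ) (A : Matrix (Fin n) (Fin n) ℂ) (hA : A.IsHermitian)
    (hent : ∀ i j, A i j ∈ Subring.closure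
      ({Complex.exp (2 * Real.pi * Complex.I / 3)} : Set ℂ))
    (heig : ∀ i, hA.eigenvalues i ∈ Set.Ico (-2 : ℝ) (2.5 : ℝ))
    (hspan : ∀ i j, hA.eigenvalues i - hA.eigenvalues j < 4) :
    ∀ i, {j | A i j ≠ 0}.ncard ≤ 4 := by
  intro i
  set U : Matrix (Fin n) (Fin n) ℂ := (hA.eigenvectorUnitary : Matrix (Fin n) (Fin n) ℂ) with hU
  set e := hA.eigenvalues with he
  set w : Fin n → ℝ := fun k => Complex.normSq (U i k) with hw
  have h1 : A = U * Matrix.diagonal (fun k => ((e k : ℝ) : ℂ)) * star U := by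
    have := hA.spectral_theorem
    rw [Unitary.conjStarAlgAut_apply] at this
    exact this
  have hUU : U * star U = 1 := Unitary.coe_mul_star_self _
  have hsU : star U * U = 1 := Unitary.coe_star_mul_self _
  have hsumw : ∑ k, w k = 1 := by
    have h2 := entry_formula U (fun _ => 1) i
    have h3 : Matrix.diagonal (fun _ : Fin n => ((1:ℝ) : ℂ)) = 1 := by simp
    rw [h3, Matrix.mul_one, hUU] at h2
    have : ((∑ k, (1:ℝ) * Complex.normSq (U i k) : ℝ) : ℂ) = ((1:ℝ):ℂ) := by
      rw [← h2]; simp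
    have := Complex.ofReal_injective this
    simpa [hw] using this
  have hd : A i i = ((∑ k, e k * w k : ℝ) : ℂ) := by
    rw [h1, entry_formula]
  have h2 : A * A = U * Matrix.diagonal (fun k => ((e k * e k : ℝ) : ℂ)) * star U := by
    rw [h1]
    have : (U * Matrix.diagonal (fun k => ((e k : ℝ) : ℂ)) * star U)
        * (U * Matrix.diagonal (fun k => ((e k : ℝ) : ℂ)) * star U)
        = U * (Matrix.diagonal (fun k => ((e k : ℝ) : ℂ)) * ((star U * U)
          * (Matrix.diagonal (fun k => ((e k : ℝ) : ℂ)) * star U))) := by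
      simp only [Matrix.mul_assoc]
    rw [this, hsU, Matrix.one_mul, ← Matrix.mul_assoc (Matrix.diagonal _),
      Matrix.diagonal_mul_diagonal]
    rw [← Matrix.mul_assoc]
    congr 2
    ext k
    push_cast
    ring
  have hs2 : (A * A) i i = ((∑ k, (e k * e k) * w k : ℝ) : ℂ) := by
    rw [h2, entry_formula]
  have halt : (A * A) i i = ((∑ j, Complex.normSq (A i j) : ℝ) : ℂ) := by
    rw [Matrix.mul_apply]
    push_cast
    refine Finset.sum_congr rfl fun j _ => ?_
    rw [← hA.apply j i, Complex.star_def, Complex.mul_conj]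
  have hkey : ∑ j, Complex.normSq (A i j) = ∑ k, (e k * e k) * w k :=
    Complex.ofReal_injective (halt.symm.trans hs2)
  -- min and max eigenvalues
  have hne : (Finset.univ : Finset (Fin n)).Nonempty := ⟨i, Finset.mem_univ i⟩
  set μ := Finset.univ.inf' hne e with hμdef
  set M := Finset.univ.sup' hne e with hMdef
  have hspan' : M - μ < 4 := by
    obtain ⟨k1, _, hk1⟩ := Finset.exists_mem_eq_sup' hne e
    obtain ⟨k2, _, hk2⟩ := Finset.exists_mem_eq_inf' hne e
    rw [hMdef, hμdef, hk1, hk2]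
    exact hspan k1 k2
  have hμM : μ ≤ M := le_trans (Finset.inf'_le e (Finset.mem_univ i))
    (Finset.le_sup' e (Finset.mem_univ i))
  set d := ∑ k, e k * w k with hddef
  have hq : ∑ k, (e k * e k) * w k ≤ (μ + M) * d - μ * M := by
    have hRHS : ∑ k, ((μ + M) * e k - μ * M) * w k = (μ + M) * d - μ * M := by
      have expand : ∑ k, ((μ + M) * e k - μ * M) * w k
          = (μ + M) * (∑ k, e k * w k) - μ * M * (∑ k, w k) := by
        rw [Finset.mul_sum, Finset.mul_sum, ← Finset.sum_sub_distrib]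
        exact Finset.sum_congr rfl fun k _ => by ring
      rw [expand, hsumw, hddef, mul_one]
    rw [← hRHS]
    refine Finset.sum_le_sum fun k _ => ?_
    have hwk : 0 ≤ w k := Complex.normSq_nonneg _
    have hμk : μ ≤ e k := Finset.inf'_le e (Finset.mem_univ k)
    have hMk : e k ≤ M := Finset.le_sup' e (Finset.mem_univ k)
    nlinarith [mul_nonneg (mul_nonneg (sub_nonneg.2 hμk) (sub_nonneg.2 hMk)) hwk]
  have hdiag : Complex.normSq (A i i) = d * d := by
    rw [hd, Complex.normSq_ofReal]
  have hoff : ∑ j ∈ Finset.univ.erase i, Complex.normSq (A i j)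
      = (∑ j, Complex.normSq (A i j)) - d * d := by
    rw [← hdiag, ← Finset.sum_erase_add Finset.univ _ (Finset.mem_univ i)]
    ring
  have hofflt : ∑ j ∈ Finset.univ.erase i, Complex.normSq (A i j) < 4 := by
    rw [hoff]
    have hkey' := hkey
    nlinarith [sq_nonneg (2*d - μ - M), hspan', hμM, hq, hkey]
  -- counting
  set T := Finset.univ.filter (fun j => j ≠ i ∧ A i j ≠ 0) with hT
  have hTsub : T ⊆ Finset.univ.erase i := fun j hj =>
    Finset.mem_erase.2 ⟨(Finset.mem_filter.1 hj).2.1, Finset.mem_univ j⟩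
  have hcard : (T.card : ℝ) ≤ ∑ j ∈ Finset.univ.erase i, Complex.normSq (A i j) := by
    calc (T.card : ℝ) = ∑ _j ∈ T, 1 := by simp
    _ ≤ ∑ j ∈ T, Complex.normSq (A i j) :=
        Finset.sum_le_sum fun j hj => eisenstein_norm (hent i j) (Finset.mem_filter.1 hj).2.2
    _ ≤ _ := Finset.sum_le_sum_of_subset_of_nonneg hTsub
        (fun j _ _ => Complex.normSq_nonneg _)
  have hT3 : T.card ≤ 3 := by
    have : (T.card : ℝ) < 4 := lt_of_le_of_lt hcard hofflt
    have : T.card < 4 := by exact_mod_cast this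
    omega
  have hset : {j | A i j ≠ 0} = ↑(Finset.univ.filter (fun j => A i j ≠ 0)) := by
    ext j; simp
  rw [hset, Set.ncard_coe_finset]
  have hsub : Finset.univ.filter (fun j => A i j ≠ 0) ⊆ insert i T := by
    intro j hj
    rcases eq_or_ne j i with rfl | hji
    · exact Finset.mem_insert_self _ _
    · exact Finset.mem_insert_of_mem (Finset.mem_filter.2
        ⟨Finset.mem_univ j, hji, (Finset.mem_filter.1 hj).2⟩)
  calc (Finset.univ.filter (fun j => A i j ≠ 0)).card ≤ (insert i T).card :=
        Finset.card_le_card hsub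
  _ ≤ T.card + 1 := Finset.card_insert_le _ _
  _ ≤ 4 := by omega
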